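/- Jordan-block formula at t = −1: suppose R contains an element i with i² = −1 and set t^{1/2} = i (so t = −1). Then for every symmetric Laurent polynomial P ∈ 𝒳 (i.e., s(P) = P), the Demazure–Lusztig operator satisfies T(P·(X − X⁻¹)) = i·P·(X − X⁻¹) − 2i·P·(X + X⁻¹). -/

import Mathlib

open LaurentPolynomial

/-- `T 2 - 1` is a non-zero-divisor in the Laurent polynomial ring. -/
lemma aux_cancel {R : Type*} [CommRing R] (d : LaurentPolynomial R)
    (h : (T 2 - 1) * d = 0) : d = 0 := by
  have key : ∀ n : ℤ, d.coeff (n + 2) = d.coeff n := by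
    intro n
    have h' : ((T 2 - 1 : LaurentPolynomial R) * d).coeff (n + 2) = (0 : LaurentPolynomial R).coeff (n + 2) := by
      rw [h]
    have hT2 : ((T 2 : LaurentPolynomial R) * d).coeff (n + 2) = d.coeff n := by
      rw [show (T 2 : LaurentPolynomial R) = AddMonoidAlgebra.single 2 1 from rfl,
        AddMonoidAlgebra.coeff_single_mul_apply]
      simp
    rw [sub_mul, one_mul, AddMonoidAlgebra.coeff_zero, Finsupp.coe_zero, Pi.zero_apply,
      AddMonoidAlgebra.coeff_sub, Finsupp.sub_apply, hT2,
      sub_eq_zero] at h'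
    exact h' ▸ rfl
  by_contra hd
  have hne : d.coeff.support.Nonempty :=
    Finsupp.support_nonempty_iff.mpr (fun h0 => hd (AddMonoidAlgebra.coeff_eq_zero.mp h0))
  set M := d.coeff.support.max' hne with hM
  have hMmem : M ∈ d.coeff.support := d.coeff.support.max'_mem hne
  have h2 : M + 2 ∈ d.coeff.support := by
    rw [Finsupp.mem_support_iff, key]
    exact Finsupp.mem_support_iff.mp hMmem
  have := d.coeff.support.le_max' _ h2
  omega

lemma aux_C_mul_T_eq_smul {R : Type*} [CommRing R] (a : R) (n : ℤ) :
    (C a * T n : LaurentPolynomial R) = a • T n := by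
  rw [← single_eq_C_mul_T]
  show AddMonoidAlgebra.single n a = a • AddMonoidAlgebra.single n (1 : R)
  rw [AddMonoidAlgebra.smul_single', mul_one]

lemma aux_s_single {R : Type*} [CommRing R] (s : Module.End R (LaurentPolynomial R))
    (hs : ∀ n : ℤ, s (T n) = T (-n)) (a : R) (n : ℤ) :
    s (C a * T n) = C a * T (-n) := by
  rw [aux_C_mul_T_eq_smul, aux_C_mul_T_eq_smul, map_smul, hs]

lemma aux_s_mul_T {R : Type*} [CommRing R] (s : Module.End R (LaurentPolynomial R))
    (hs : ∀ n : ℤ, s (T n) = T (-n)) (f : LaurentPolynomial R) (n : ℤ) :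
    s (f * T n) = s f * T (-n) := by
  induction f using LaurentPolynomial.induction_on' with
  | add p q hp hq => rw [add_mul, map_add, hp, hq, map_add, add_mul]
  | C_mul_T m a =>
    rw [mul_assoc, ← T_add, aux_s_single s hs, aux_s_single s hs, mul_assoc, ← T_add]
    ring_nf

/-- Jordan-block formula at `t = −1`: with `t^{1/2} = i`, `i² = −1` (so
`t^{1/2} − t^{−1/2} = 2i`), for every symmetric Laurent polynomial `P` the
Demazure–Lusztig operator satisfies
`T(P·(X − X⁻¹)) = i·P·(X − X⁻¹) − 2i·P·(X + X⁻¹)`.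
Here `s` is the `R`-linear operator with `s(Xⁿ) = X⁻ⁿ` and `TT` is the
Demazure–Lusztig operator, encoded by `hT` (which says
`(X²−1)·(TT f − i·s f) = 2i·(s f − f)`, i.e. `TT f = i·s f + 2i·g_f` with
`(X²−1)·g_f = s f − f`). -/
theorem stmt2 (R : Type*) [CommRing R] (i : R) (hi : i ^ 2 = -1)
    (s TT : Module.End R (LaurentPolynomial R))
    (hs : ∀ n : ℤ, s (T n) = T (-n))
    (hT : ∀ f : LaurentPolynomial R,
      (T 2 - 1) * (TT f - i • s f) = (2 * i) • (s f - f)) :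
    ∀ P : LaurentPolynomial R, s P = P →
      TT (P * (T 1 - T (-1))) =
        i • (P * (T 1 - T (-1))) - (2 * i) • (P * (T 1 + T (-1))) := by
  intro P hP
  set f : LaurentPolynomial R := P * (T 1 - T (-1)) with hf
  have hsf : s f = -f := by
    rw [hf, mul_sub, map_sub, aux_s_mul_T s hs, aux_s_mul_T s hs, hP]
    simp only [neg_neg]
    ring
  have hTf := hT f
  rw [hsf] at hTf
  set RHS : LaurentPolynomial R :=
    i • (P * (T 1 - T (-1))) - (2 * i) • (P * (T 1 + T (-1))) with hR
  suffices h : (T 2 - 1) * (TT f - RHS) = 0 by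
    have := aux_cancel _ h
    rw [sub_eq_zero] at this
    exact this
  have expand : (T 2 - 1) * (TT f - RHS)
      = (T 2 - 1) * (TT f - i • (-f)) - (2 * i) • (-f - f)
        + ((2 * i) • (-f - f) + (T 2 - 1) * (i • (-f)) - (T 2 - 1) * RHS) := by
    ring
  rw [expand, hTf, sub_self, zero_add]
  rw [hR, hf]
  have hsm : ∀ (r : R) (g : LaurentPolynomial R), r • g = C r * g := by
    intro r g
    rw [← smul_eq_mul, C_eq_algebraMap, algebraMap_smul]
  simp only [hsm, smul_neg]
  have hC2i : (C (2 * i) : LaurentPolynomial R) = 2 * C i := by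
    rw [map_mul, map_ofNat]
  rw [hC2i]
  have hT1 : (T 2 : LaurentPolynomial R) * T (-1) = T 1 := by
    rw [← T_add]; norm_num
  linear_combination (4 * C i * P) * hT1
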